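/- Existence and uniqueness of the critical coefficient: There exists a unique β* ∈ (0,1) such that Φ(β*) = ε. -/

import Mathlib

set_option maxHeartbeats 1000000


open scoped RealInnerProductSpace

noncomputable def dvec {n : ℕ} (g d : EuclideanSpace ℝ (Fin n)) (ξ β : ℝ) :
    EuclideanSpace ℝ (Fin n) :=
  β • d - ((1 - β) * ξ) • g

noncomputable def Phi {n : ℕ} (g d : EuclideanSpace ℝ (Fin n)) (ξ β : ℝ) : ℝ :=
  -⟪g, dvec g d ξ β⟫ / (‖g‖ * ‖dvec g d ξ β‖)

/-- Existence and uniqueness of the critical coefficient: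
there is a unique β* ∈ (0,1) with Φ(β*) = ε. -/
theorem critical_coefficient_exists_unique {n : ℕ} (g d : EuclideanSpace ℝ (Fin n))
    (hind : LinearIndependent ℝ ![g, d]) (ε ξ : ℝ)
    (hε : ε ∈ Set.Ioo (0 : ℝ) 1) (hξ : 0 < ξ)
    (hviol : -⟪g, d⟫ < ε * ‖g‖ * ‖d‖) :
    ∃! β : ℝ, β ∈ Set.Ioo (0 : ℝ) 1 ∧ Phi g d ξ β = ε := by
  obtain ⟨hε0, hε1⟩ := hε
  have hg : g ≠ 0 := hind.ne_zero 0
  have hG : (0:ℝ) < ‖g‖ := norm_pos_iff.mpr hg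
  obtain ⟨c, hc⟩ : ∃ c : ℝ, c = ⟪g, d⟫ / ‖g‖^2 := ⟨_, rfl⟩
  obtain ⟨w, hw⟩ : ∃ w : EuclideanSpace ℝ (Fin n), w = d - c • g := ⟨_, rfl⟩
  have hd_eq : d = c • g + w := by rw [hw]; module
  have hgw : ⟪g, w⟫ = 0 := by
    rw [hw, inner_sub_right, real_inner_smul_right, real_inner_self_eq_norm_sq, hc]
    field_simp
    ring
  have hwne : w ≠ 0 := by
    intro h0
    rw [LinearIndependent.pair_iff] at hind
    have := hind c (-1) (by rw [hd_eq, h0]; module)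
    simp at this
  have hW : (0:ℝ) < ‖w‖ := norm_pos_iff.mpr hwne
  have hgd : ⟪g, d⟫ = c * ‖g‖^2 := by
    rw [hd_eq, inner_add_right, real_inner_smul_right, real_inner_self_eq_norm_sq, hgw]; ring
  have hdvec : ∀ β : ℝ, dvec g d ξ β = (β * c - (1-β)*ξ) • g + β • w := by
    intro β; rw [dvec, hd_eq]; module
  have hinner : ∀ β : ℝ, ⟪g, dvec g d ξ β⟫ = (β*c - (1-β)*ξ) * ‖g‖^2 := by
    intro β
    rw [hdvec, inner_add_right, real_inner_smul_right, real_inner_smul_right,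
      real_inner_self_eq_norm_sq, hgw]
    ring
  have hnormsq : ∀ β : ℝ, ‖dvec g d ξ β‖^2 = (β*c-(1-β)*ξ)^2*‖g‖^2 + β^2*‖w‖^2 := by
    intro β
    rw [hdvec, norm_add_sq_real, real_inner_smul_left, real_inner_smul_right, hgw,
      norm_smul, norm_smul]
    simp [Real.norm_eq_abs, mul_pow, sq_abs]
  have hdnormsq : ‖d‖^2 = c^2*‖g‖^2 + ‖w‖^2 := by
    rw [hd_eq, norm_add_sq_real, real_inner_smul_left, hgw, norm_smul]
    simp [Real.norm_eq_abs, mul_pow, sq_abs]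
  obtain ⟨S, hSdef⟩ : ∃ S : ℝ, S = Real.sqrt (1 - ε^2) := ⟨_, rfl⟩
  have hS : 0 < S := hSdef ▸ Real.sqrt_pos.mpr (by nlinarith)
  have hS2 : S^2 = 1 - ε^2 := hSdef ▸ Real.sq_sqrt (by nlinarith)
  have hkey : 0 < c*‖g‖*S + ε*‖w‖ := by
    rcases le_or_gt 0 c with hc0 | hc0
    · positivity
    · have h1 : -c * ‖g‖ < ε * ‖d‖ := by
        rw [hgd] at hviol
        have hd0 : 0 ≤ ‖d‖ := norm_nonneg _
        nlinarith
      have h2 : (-c*‖g‖*S)^2 < (ε*‖w‖)^2 := by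
        have h0 : (-c*‖g‖)^2 < (ε*‖d‖)^2 := by
          apply sq_lt_sq' _ h1
          nlinarith
        nlinarith [hdnormsq, hS2]
      have h3 : -c*‖g‖*S < ε*‖w‖ :=
        lt_of_pow_lt_pow_left₀ 2 (by positivity) h2
      linarith
  obtain ⟨K, hKdef⟩ : ∃ K : ℝ, K = (c+ξ)*‖g‖*S + ε*‖w‖ := ⟨_, rfl⟩
  obtain ⟨L, hLdef⟩ : ∃ L : ℝ, L = ξ*‖g‖*S := ⟨_, rfl⟩
  have hL : 0 < L := by rw [hLdef]; positivity
  have hLK : L < K := by rw [hKdef, hLdef]; nlinarith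
  have hK : 0 < K := lt_trans hL hLK
  have hchar : ∀ β : ℝ, β ∈ Set.Ioo (0:ℝ) 1 → (Phi g d ξ β = ε ↔ β * K = L) := by
    rintro β ⟨hβ0, hβ1⟩
    obtain ⟨t, ht⟩ : ∃ t : ℝ, t = β*c - (1-β)*ξ := ⟨_, rfl⟩
    obtain ⟨R, hRdef⟩ : ∃ R : ℝ, R = ‖dvec g d ξ β‖ := ⟨_, rfl⟩
    have hR2 : R^2 = t^2*‖g‖^2 + β^2*‖w‖^2 := by rw [hRdef, hnormsq, ht]
    have hRpos : 0 < R := by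
      have hR0 : 0 ≤ R := hRdef ▸ norm_nonneg _
      rcases eq_or_lt_of_le hR0 with h | h
      · exfalso
        have : R^2 = 0 := by rw [← h]; ring
        nlinarith [sq_nonneg (t*‖g‖), mul_pos (pow_pos hβ0 2) (pow_pos hW 2)]
      · exact h
    have hPhi : Phi g d ξ β = (-t * ‖g‖) / R := by
      rw [Phi, hinner β, ← ht, ← hRdef]
      rw [div_eq_div_iff (by positivity) hRpos.ne']
      ring
    constructor
    · intro hP
      rw [hPhi, div_eq_iff hRpos.ne'] at hP
      have htpos : 0 < -t * ‖g‖ := by rw [hP]; positivity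
      have h2 : t^2 * ‖g‖^2 * (1 - ε^2) = ε^2 * β^2 * ‖w‖^2 := by
        linear_combination (-t*‖g‖ + ε*R) * hP + ε^2 * hR2
      have h3 : (-t*‖g‖*S)^2 = (ε*β*‖w‖)^2 := by
        linear_combination t^2*‖g‖^2 * hS2 + h2
      have hsum : 0 < (-t*‖g‖*S) + ε*β*‖w‖ := by positivity
      have h4 : -t*‖g‖*S = ε*β*‖w‖ := by
        have hz : (-t*‖g‖*S - ε*β*‖w‖) * (-t*‖g‖*S + ε*β*‖w‖) = 0 := by
          linear_combination h3
        rcases mul_eq_zero.mp hz with h | h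
        · linarith
        · linarith
      rw [ht] at h4
      rw [hKdef, hLdef]
      linear_combination -h4
    · intro hβK
      have h4 : -t*‖g‖*S = ε*β*‖w‖ := by
        rw [hKdef, hLdef] at hβK
        rw [ht]; linear_combination -hβK
      have htpos : 0 < -t * ‖g‖ := by
        have h5 : 0 < -t*‖g‖*S := by rw [h4]; positivity
        nlinarith
      have h1 : -t * ‖g‖ = ε * R := by
        have h2 : t^2*‖g‖^2*(1-ε^2) = ε^2*β^2*‖w‖^2 := by
          linear_combination (-t*‖g‖*S + ε*β*‖w‖) * h4 - t^2*‖g‖^2*hS2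
        have h5 : (-t*‖g‖)^2 = (ε*R)^2 := by
          linear_combination h2 - ε^2 * hR2
        have hsum : 0 < (-t*‖g‖) + ε*R := by positivity
        have hz : (-t*‖g‖ - ε*R) * (-t*‖g‖ + ε*R) = 0 := by linear_combination h5
        rcases mul_eq_zero.mp hz with h | h
        · linarith
        · linarith
      rw [hPhi, h1, mul_div_assoc, div_self hRpos.ne', mul_one]
  refine ⟨L / K, ⟨⟨by positivity, (div_lt_one hK).mpr hLK⟩, ?_⟩, ?_⟩
  · rw [hchar (L/K) ⟨by positivity, (div_lt_one hK).mpr hLK⟩]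
    field_simp
  · rintro β ⟨hβm, hβP⟩
    have hβK := (hchar β hβm).mp hβP
    rw [eq_div_iff hK.ne']
    exact hβK
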